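/- arXiv:math/0412528 — 2 statements merged into one kernel-verified Lean document; each statement's English description precedes it below -/
import Mathlib

section
/- Let φ_1, φ_2 be strictly positive unital linear functionals on ℂ[X] (polynomials in one variable), and let φ = φ_1 ⋆ φ_2 denote their free product on the free algebra P_2. Then the moment kernel K_φ restricted to the two words {1, 12} is a singular 2×2 matrix; in particular φ is not strictly positive. -/
open scoped ComplexOrder

/-- The involution on one-variable polynomials: conjugate the coefficients. -/
noncomputable def pstar (p : Polynomial ℂ) : Polynomial ℂ := p.map (starRingEnd ℂ)

/-- The monomial `X_σ` in the free algebra `P_N`, for a word `σ`. -/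
noncomputable def Xw {N : ℕ} (σ : List (Fin N)) : FreeAlgebra ℂ (Fin N) :=
  (σ.map (FreeAlgebra.ι ℂ)).prod

set_option maxHeartbeats 1000000 in
/-- if `φ = φ_1 ⋆ φ_2` is the free product of two strictly positive
unital functionals on `ℂ[X]`, then the moment kernel `K_φ(α,β) = φ(X_{I(α)}X_β)`
restricted to the words `{1, 12}` is a singular `2×2` matrix; in particular `φ`
is not strictly positive. -/
theorem free_product_not_strictly_positive
    (φv : Fin 2 → Polynomial ℂ →ₗ[ℂ] ℂ)
    (hunit : ∀ k, φv k 1 = 1)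
    (hpos : ∀ k, ∀ p : Polynomial ℂ, p ≠ 0 → 0 < φv k (pstar p * p))
    (φ : FreeAlgebra ℂ (Fin 2) →ₗ[ℂ] ℂ) (hφ1 : φ 1 = 1)
    (hfree : ∀ l : List (Fin 2 × Polynomial ℂ),
      List.Chain' (fun x y => x.1 ≠ y.1) l →
      (∀ x ∈ l, (x.2).coeff 0 = 0) →
      φ ((l.map fun x => Polynomial.aeval (FreeAlgebra.ι ℂ x.1) x.2).prod)
        = (l.map fun x => φv x.1 x.2).prod) :
    (!![φ (Xw (([0] : List (Fin 2)).reverse ++ [0])),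
        φ (Xw (([0] : List (Fin 2)).reverse ++ [0, 1]));
        φ (Xw (([0, 1] : List (Fin 2)).reverse ++ [0])),
        φ (Xw (([0, 1] : List (Fin 2)).reverse ++ [0, 1]))] :
      Matrix (Fin 2) (Fin 2) ℂ).det = 0 ∧
    ¬ (∀ P : FreeAlgebra ℂ (Fin 2), P ≠ 0 → 0 < φ (star P * P)) := by
  set a := φv 0 (Polynomial.X * Polynomial.X) with ha
  set b := φv 1 Polynomial.X with hb
  have h1 : φ (FreeAlgebra.ι ℂ (0 : Fin 2) * FreeAlgebra.ι ℂ 0) = a := by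
    have := hfree [(0, Polynomial.X ^ 2)] (by simp [List.Chain']) (by simp)
    simpa [pow_two] using this
  have h2 : φ (FreeAlgebra.ι ℂ (0 : Fin 2) * (FreeAlgebra.ι ℂ 0 * FreeAlgebra.ι ℂ 1)) = a * b := by
    have := hfree [(0, Polynomial.X ^ 2), (1, Polynomial.X)] (by simp [List.Chain']) (by simp)
    simpa [pow_two, mul_assoc] using this
  have h3 : φ (FreeAlgebra.ι ℂ (1 : Fin 2) * (FreeAlgebra.ι ℂ 0 * FreeAlgebra.ι ℂ 0)) = b * a := by
    have := hfree [(1, Polynomial.X), (0, Polynomial.X ^ 2)] (by simp [List.Chain']) (by simp)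
    simpa [pow_two, mul_assoc] using this
  have h4 : φ (FreeAlgebra.ι ℂ (1 : Fin 2) *
      (FreeAlgebra.ι ℂ 0 * (FreeAlgebra.ι ℂ 0 * FreeAlgebra.ι ℂ 1))) = b * (a * b) := by
    have := hfree [(1, Polynomial.X), (0, Polynomial.X ^ 2), (1, Polynomial.X)]
      (by simp [List.Chain']) (by simp)
    simpa [pow_two, mul_assoc] using this
  constructor
  · simp only [Xw, List.reverse_cons, List.reverse_nil, List.nil_append, List.cons_append,
      List.map_cons, List.map_nil, List.prod_cons, List.prod_nil, mul_one,
      Matrix.det_fin_two_of]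
    rw [h1, h2, h3, h4]
    ring
  · intro h
    set P : FreeAlgebra ℂ (Fin 2) :=
      FreeAlgebra.ι ℂ 0 * FreeAlgebra.ι ℂ 1 - b • FreeAlgebra.ι ℂ 0 with hP
    have hPne : P ≠ 0 := by
      intro h0
      set L : FreeAlgebra ℂ (Fin 2) →ₐ[ℂ] Polynomial ℂ :=
        FreeAlgebra.lift ℂ (fun _ : Fin 2 => (Polynomial.X : Polynomial ℂ)) with hL
      have hz : L P = 0 := by rw [h0]; exact map_zero L
      rw [hP, map_sub, map_mul, map_smul] at hz
      have hx : ∀ i : Fin 2, L (FreeAlgebra.ι ℂ i) = Polynomial.X := fun i => by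
        rw [hL]; exact FreeAlgebra.lift_ι_apply _ _
      rw [hx 0, hx 1] at hz
      rw [← pow_two] at hz
      have h2 := congrArg (fun q => Polynomial.coeff q 2) hz
      simp only [Polynomial.coeff_sub, Polynomial.coeff_smul, Polynomial.coeff_X_pow,
        Polynomial.coeff_X, Polynomial.coeff_zero] at h2
      norm_num at h2
    have hsm : ∀ (c : ℂ) (x : FreeAlgebra ℂ (Fin 2)),
        star (c • x) = c • star x := fun c x => by
      rw [Algebra.smul_def, star_mul, FreeAlgebra.star_algebraMap, ← Algebra.commutes,
        ← Algebra.smul_def]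
    have hval : φ (star P * P) = 0 := by
      have hexp : star P * P =
          FreeAlgebra.ι ℂ 1 * (FreeAlgebra.ι ℂ 0 * (FreeAlgebra.ι ℂ 0 * FreeAlgebra.ι ℂ 1))
          - b • (FreeAlgebra.ι ℂ 1 * (FreeAlgebra.ι ℂ 0 * FreeAlgebra.ι ℂ 0))
          - b • (FreeAlgebra.ι ℂ 0 * (FreeAlgebra.ι ℂ 0 * FreeAlgebra.ι ℂ 1))
          + (b * b) • (FreeAlgebra.ι ℂ 0 * FreeAlgebra.ι ℂ 0) := by
        simp only [hP, star_sub, star_mul, hsm, FreeAlgebra.star_ι, RCLike.star_def,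
          sub_mul, mul_sub, smul_mul_assoc, mul_smul_comm, smul_smul, smul_add, smul_sub, smul_neg, neg_smul, mul_assoc]
        abel
      rw [hexp]
      simp only [map_add, map_sub, map_smul, h1, h2, h3, h4, smul_eq_mul]
      ring
    have := h P hPne
    rw [hval] at this
    exact lt_irrefl 0 this
end

section
/- With the hypotheses of the path-expansion theorem, the moments of a strictly positive functional φ on P_N satisfy s_σ = Σ_{p ∈ M_σ} w(p) for every nonempty word σ, where M_σ is the set of admissible colored Motzkin-type paths from (0,i_p,0) to (|σ|,i_1,0) and w is the matrix-weight function determined by the Jacobi coefficients A_{n,k}, B_{n,k} of φ. -/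
open scoped ComplexOrder

/-- The underlying vector space `l²`-span: finitely supported functions on `F_N^+`. -/
abbrev W (N : ℕ) := List (Fin N) →₀ ℂ

/-- The standard basis vector `e_σ`. -/
noncomputable def eb {N : ℕ} (σ : List (Fin N)) : W N := Finsupp.single σ 1

/-- The (finite) set of words of length `n` over `{1,…,N}`. -/
def Words (N n : ℕ) : Finset (List (Fin N)) :=
  Finset.image (fun f : Fin n → Fin N => List.ofFn f) Finset.univ

/-- The adjoint block `A*_{n,k}`, defined entrywise from `A_{n,k}`:
`(A*_{n,k})_{α,β} = conj (A_{n,k})_{β,α}` for `|α| = n-1`, `|β| = n`. -/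
noncomputable def astar {N : ℕ} (A : ℕ → Fin N → Module.End ℂ (W N)) (n : ℕ)
    (k : Fin N) : Module.End ℂ (W N) :=
  Finsupp.lift (W N) ℂ (List (Fin N))
    (fun β => ∑ α ∈ Words N (n - 1), (starRingEnd ℂ) ((A n k (eb α)) β) • eb α)

/-- Partial sum of the first `m` steps. -/
def psum {L : ℕ} (f : Fin L → ℤ) (m : ℕ) : ℤ :=
  ∑ i : Fin L, if (i : ℕ) < m then f i else 0

open Classical in
/-- Motzkin-type paths of length `L` from height `j` to height `k`: step sequences
with values in `{-1,0,1}` (fall, level, rise) staying at nonnegative heights. -/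
noncomputable def pathsSet (L j k : ℕ) : Finset (Fin L → ℤ) :=
  (Fintype.piFinset fun _ => ({-1, 0, 1} : Finset ℤ)).filter
    (fun f => (∀ m ∈ Finset.range (L + 1), 0 ≤ (j : ℤ) + psum f m) ∧
      (j : ℤ) + psum f L = k)

/-- The weight of a single step of color `c` and increment `s`, taken at height `h`:
`A_{h+1,c}` for a rise, `B_{h,c}` for a level step, `A*_{h,c}` for a fall
(color-change steps have weight `I` and are omitted). -/
noncomputable def stepWeight {N : ℕ} (A B : ℕ → Fin N → Module.End ℂ (W N))
    (c : Fin N) (h s : ℤ) : Module.End ℂ (W N) :=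
  if s = 1 then A (h.toNat + 1) c else if s = 0 then B h.toNat c else astar A h.toNat c

/-- The weight `w(p)` of a path `p ∈ M_σ` starting at height `j`: the product of the
step weights in reverse order; the color of the `n`-th step is the `n`-th letter of
the reversed word `I(σ)`. -/
noncomputable def pathWeight {N : ℕ} (A B : ℕ → Fin N → Module.End ℂ (W N))
    (σ : List (Fin N)) (j : ℕ) (f : Fin σ.length → ℤ) : Module.End ℂ (W N) :=
  ((List.ofFn fun n : Fin σ.length =>
      stepWeight A B (σ.reverse.get (Fin.cast (List.length_reverse : σ.reverse.length = σ.length).symm n))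
        ((j : ℤ) + psum f n) (f n)).reverse).prod

/-- The Jacobi operator `J_k` on the span of the basis `{e_σ}`, with diagonal blocks
`B_{n,k}` and off-diagonal blocks `A_{n,k}`, `A*_{n,k}`. -/
noncomputable def Jop {N : ℕ} (A B : ℕ → Fin N → Module.End ℂ (W N)) (k : Fin N) :
    Module.End ℂ (W N) :=
  Finsupp.lift (W N) ℂ (List (Fin N))
    (fun τ => A (τ.length + 1) k (eb τ) + B τ.length k (eb τ)
      + astar A τ.length k (eb τ))

/-- `J_σ = J_{j_1} ⋯ J_{j_l}` for a word `σ = j_1 … j_l`. -/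
noncomputable def Jword {N : ℕ} (A B : ℕ → Fin N → Module.End ℂ (W N))
    (σ : List (Fin N)) : Module.End ℂ (W N) :=
  (σ.map (Jop A B)).prod

section Aux
variable {N : ℕ}

lemma mem_Words {α : List (Fin N)} {n : ℕ} : α ∈ Words N n ↔ α.length = n := by
  constructor
  · intro h
    simp only [Words, Finset.mem_image] at h
    obtain ⟨f, _, rfl⟩ := h
    simp
  · intro h
    subst h
    simp only [Words, Finset.mem_image]
    exact ⟨α.get, Finset.mem_univ _, List.ofFn_get α⟩

lemma eb_apply (τ γ : List (Fin N)) : eb τ γ = if τ = γ then 1 else 0 :=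
  Finsupp.single_apply

/-- `v` is supported on words of length `n`. -/
def SuppOn (n : ℕ) (v : W N) : Prop := ∀ τ : List (Fin N), v τ ≠ 0 → τ.length = n

lemma suppOn_zero (n : ℕ) : SuppOn n (0 : W N) := fun τ h => absurd rfl h

lemma suppOn_eb (τ : List (Fin N)) : SuppOn τ.length (eb τ) := by
  intro γ h
  rw [eb_apply] at h
  by_cases hc : τ = γ
  · rw [hc]
  · simp [hc] at h

lemma repr_eq (v : W N) : v = ∑ τ ∈ v.support, v τ • eb τ := by
  ext γ
  rw [Finset.sum_apply']
  simp only [Finsupp.smul_apply, eb_apply, smul_eq_mul, mul_ite, mul_one, mul_zero]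
  rw [Finset.sum_ite_eq' v.support γ (fun τ => v τ)]
  split
  · rfl
  · next h => exact (Finsupp.notMem_support_iff.mp h).symm ▸ rfl

lemma end_apply_sum (T : Module.End ℂ (W N)) (v : W N) :
    T v = ∑ τ ∈ v.support, v τ • T (eb τ) := by
  conv_lhs => rw [repr_eq v]
  rw [map_sum]
  simp only [map_smul]

lemma end_suppOn {n : ℕ} (T : Module.End ℂ (W N))
    (h : ∀ β : List (Fin N), SuppOn n (T (eb β))) (v : W N) : SuppOn n (T v) := by
  intro γ hγ
  rw [end_apply_sum, Finset.sum_apply'] at hγ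
  obtain ⟨τ, _, hne⟩ := Finset.exists_ne_zero_of_sum_ne_zero hγ
  simp only [Finsupp.smul_apply, smul_eq_mul] at hne
  exact h τ γ (right_ne_zero_of_mul hne)

lemma end_zero_on {m : ℕ} (T : Module.End ℂ (W N)) (v : W N) (hv : SuppOn m v)
    (h : ∀ β : List (Fin N), β.length = m → T (eb β) = 0) : T v = 0 := by
  rw [end_apply_sum]
  refine Finset.sum_eq_zero fun τ hτ => ?_
  rw [h τ (hv τ (Finsupp.mem_support_iff.mp hτ)), smul_zero]

lemma suppOn_sum_eb {n : ℕ} {s : Finset (List (Fin N))}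
    (hs : ∀ α ∈ s, α.length = n) (c : List (Fin N) → ℂ) :
    SuppOn n (∑ α ∈ s, c α • eb α) := by
  intro γ hγ
  rw [Finset.sum_apply'] at hγ
  obtain ⟨α, hα, hne⟩ := Finset.exists_ne_zero_of_sum_ne_zero hγ
  simp only [Finsupp.smul_apply, eb_apply, smul_eq_mul] at hne
  rcases eq_or_ne α γ with rfl | h
  · exact hs _ hα
  · simp [h] at hne

end Aux
section Aux2
variable {N : ℕ} (A B : ℕ → Fin N → Module.End ℂ (W N))

lemma astar_eb (n : ℕ) (k : Fin N) (β : List (Fin N)) :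
    astar A n k (eb β)
      = ∑ α ∈ Words N (n - 1), (starRingEnd ℂ) ((A n k (eb α)) β) • eb α := by
  simp [astar, eb, Finsupp.lift_apply, Finsupp.sum_single_index]

lemma Jop_eb (k : Fin N) (τ : List (Fin N)) :
    Jop A B k (eb τ) = A (τ.length + 1) k (eb τ) + B τ.length k (eb τ)
      + astar A τ.length k (eb τ) := by
  simp [Jop, eb, Finsupp.lift_apply, Finsupp.sum_single_index]

variable (hA0 : ∀ n k (β : List (Fin N)), β.length + 1 ≠ n → A n k (eb β) = 0)
variable (hA1 : ∀ n k (β α : List (Fin N)), (A n k (eb β)) α ≠ 0 → α.length = n)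
variable (hB1 : ∀ n k (β α : List (Fin N)), (B n k (eb β)) α ≠ 0 → α.length = n)

section
include hA1
lemma suppOn_A (n : ℕ) (k : Fin N) (v : W N) : SuppOn n (A n k v) :=
  end_suppOn _ (fun β γ h => hA1 n k β γ h) v
end

section
include hB1
lemma suppOn_B (n : ℕ) (k : Fin N) (v : W N) : SuppOn n (B n k v) :=
  end_suppOn _ (fun β γ h => hB1 n k β γ h) v
end

lemma suppOn_astar (n : ℕ) (k : Fin N) (v : W N) : SuppOn (n - 1) (astar A n k v) := by
  refine end_suppOn _ (fun β => ?_) v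
  rw [astar_eb]
  exact suppOn_sum_eb (fun α hα => mem_Words.mp hα) _

section
include hA0
lemma astar_zero0 (k : Fin N) (v : W N) : astar A 0 k v = 0 := by
  rw [end_apply_sum]
  refine Finset.sum_eq_zero fun τ _ => ?_
  rw [astar_eb]
  have : ∀ α ∈ Words N (0 - 1), (starRingEnd ℂ) ((A 0 k (eb α)) τ) • eb α = 0 := by
    intro α _
    rw [hA0 0 k α (by omega)]
    simp
  rw [Finset.sum_congr rfl this]
  simp
end

section
include hA1
lemma astar_zero_on {m n : ℕ} (h : m ≠ n) (k : Fin N) (v : W N) (hv : SuppOn m v) :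
    astar A n k v = 0 := by
  refine end_zero_on _ v hv fun β hβ => ?_
  rw [astar_eb]
  refine Finset.sum_eq_zero fun α _ => ?_
  have : (A n k (eb α)) β = 0 := by
    by_contra hne
    exact h (hβ ▸ hA1 n k α β hne)
  rw [this]
  simp
end

include hA0 hA1 hB1 in
lemma Jop_suppOn {m : ℕ} (k : Fin N) (v : W N) (hv : SuppOn m v) :
    Jop A B k v = A (m + 1) k v + B m k v + astar A m k v := by
  rw [end_apply_sum (Jop A B k) v, end_apply_sum (A (m+1) k) v,
    end_apply_sum (B m k) v, end_apply_sum (astar A m k) v]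
  rw [← Finset.sum_add_distrib, ← Finset.sum_add_distrib]
  refine Finset.sum_congr rfl fun τ hτ => ?_
  rw [Jop_eb, hv τ (Finsupp.mem_support_iff.mp hτ), smul_add, smul_add]

lemma stepWeight_congr (c : Fin N) {h h' : ℤ} (s : ℤ) (hh : h.toNat = h'.toNat) :
    stepWeight A B c h s = stepWeight A B c h' s := by
  simp only [stepWeight, hh]

include hA0 hA1 hB1 in
lemma Jop_stepSum {m : ℕ} (k : Fin N) (v : W N) (hv : SuppOn m v) :
    Jop A B k v = ∑ s ∈ ({-1, 0, 1} : Finset ℤ), stepWeight A B k (m : ℤ) s v := by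
  rw [Jop_suppOn A B hA0 hA1 hB1 k v hv]
  rw [show ({-1, 0, 1} : Finset ℤ) = insert (-1) (insert 0 {1}) from rfl]
  rw [Finset.sum_insert (by decide), Finset.sum_insert (by decide), Finset.sum_singleton]
  simp only [stepWeight]
  norm_num
  abel

end Aux2
section Aux3
variable {N : ℕ} (A B : ℕ → Fin N → Module.End ℂ (W N))

lemma psum_zero {L : ℕ} (f : Fin L → ℤ) : psum f 0 = 0 := by simp [psum]

lemma psum_succ {L : ℕ} (f : Fin L → ℤ) {m : ℕ} (hm : m < L) :
    psum f (m + 1) = psum f m + f ⟨m, hm⟩ := by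
  unfold psum
  have key : ∀ i : Fin L, (if (i : ℕ) < m + 1 then f i else 0)
      = (if (i : ℕ) < m then f i else 0) + (if (i : ℕ) = m then f i else 0) := by
    intro i
    rcases lt_trichotomy (i : ℕ) m with h | h | h
    · simp [h, Nat.lt_succ_of_lt h, Nat.ne_of_lt h]
    · simp [h]
    · have h1 : ¬ ((i : ℕ) < m + 1) := by omega
      have h2 : ¬ ((i : ℕ) < m) := by omega
      have h3 : (i : ℕ) ≠ m := by omega
      simp [h1, h2, h3]
  rw [Finset.sum_congr rfl (fun i _ => key i), Finset.sum_add_distrib]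
  congr 1
  rw [Finset.sum_eq_single (⟨m, hm⟩ : Fin L)]
  · simp
  · intro i _ hne
    have : (i : ℕ) ≠ m := fun h => hne (Fin.ext h)
    simp [this]
  · intro h
    exact absurd (Finset.mem_univ _) h

lemma psum_castSucc {L : ℕ} (f : Fin (L + 1) → ℤ) {m : ℕ} (hm : m ≤ L) :
    psum (f ∘ Fin.castSucc) m = psum f m := by
  unfold psum
  rw [Fin.sum_univ_castSucc (f := fun i : Fin (L+1) => if (i : ℕ) < m then f i else 0)]
  have : ¬ ((Fin.last L : ℕ) < m) := by simp [Fin.last]; omega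
  simp only [this, if_false, add_zero, Function.comp_apply, Fin.coe_castSucc]

lemma snoc_comp_castSucc {L : ℕ} (g : Fin L → ℤ) (s : ℤ) :
    (Fin.snoc g s : Fin (L+1) → ℤ) ∘ Fin.castSucc = g := by
  funext i
  simp [Fin.snoc_castSucc]

lemma psum_snoc {L : ℕ} (g : Fin L → ℤ) (s : ℤ) {m : ℕ} (hm : m ≤ L) :
    psum (Fin.snoc g s : Fin (L+1) → ℤ) m = psum g m := by
  rw [← psum_castSucc _ hm, snoc_comp_castSucc]

lemma psum_snoc_last {L : ℕ} (g : Fin L → ℤ) (s : ℤ) :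
    psum (Fin.snoc g s : Fin (L+1) → ℤ) (L + 1) = psum g L + s := by
  rw [psum_succ _ (Nat.lt_succ_self L), psum_snoc g s (le_refl L)]
  have h2 : (Fin.snoc g s : Fin (L+1) → ℤ) ⟨L, Nat.lt_succ_self L⟩ = s := by
    show (Fin.snoc g s : Fin (L+1) → ℤ) (Fin.last L) = s
    simp
  rw [h2]

lemma pathWeight_nil (j : ℕ) (f : Fin (List.length ([] : List (Fin N))) → ℤ) :
    pathWeight A B [] j f = 1 := by
  unfold pathWeight
  rw [List.ofFn_zero]
  rfl

set_option maxHeartbeats 1000000 in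
lemma pathWeight_cons (c : Fin N) (σ : List (Fin N)) (j : ℕ)
    (f : Fin (σ.length + 1) → ℤ) :
    pathWeight A B (c :: σ) j f
      = stepWeight A B c ((j : ℤ) + psum f σ.length) (f (Fin.last σ.length))
        * pathWeight A B σ j (f ∘ Fin.castSucc) := by
  have hps : ∀ n : Fin σ.length, psum (f ∘ Fin.castSucc) (n : ℕ) = psum f (n : ℕ) :=
    fun n => psum_castSucc f (le_of_lt n.isLt)
  unfold pathWeight
  rw [List.ofFn_succ', List.concat_eq_append, List.reverse_concat', List.prod_cons]
  simp only [List.get_eq_getElem, Fin.coe_cast, List.reverse_cons, Fin.coe_castSucc,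
    Function.comp_apply, Fin.val_last, hps, List.getElem_append, List.length_reverse,
    Fin.is_lt, dif_pos, lt_irrefl, dif_neg, Nat.sub_self, List.getElem_cons_zero,
    List.getElem_singleton]
  norm_num

end Aux3
section Aux4
variable {N : ℕ} (A B : ℕ → Fin N → Module.End ℂ (W N))
variable (hA0 : ∀ n k (β : List (Fin N)), β.length + 1 ≠ n → A n k (eb β) = 0)
variable (hA1 : ∀ n k (β α : List (Fin N)), (A n k (eb β)) α ≠ 0 → α.length = n)
variable (hB1 : ∀ n k (β α : List (Fin N)), (B n k (eb β)) α ≠ 0 → α.length = n)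

include hA0 hA1 hB1 in
lemma pathLem (σ : List (Fin N)) : ∀ (j : ℕ) (f : Fin σ.length → ℤ) (v : W N),
    SuppOn j v → (∀ n, f n = -1 ∨ f n = 0 ∨ f n = 1) →
    pathWeight A B σ j f v = 0 ∨
      ((∀ m, m ≤ σ.length → 0 ≤ (j : ℤ) + psum f m) ∧
        SuppOn ((j : ℤ) + psum f σ.length).toNat (pathWeight A B σ j f v)) := by
  induction σ with
  | nil =>
    intro j f v hv _
    right
    constructor
    · intro m hm
      have hm0 : m = 0 := Nat.le_zero.mp hm
      subst hm0
      simp [psum_zero]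
    · have h2 : ((j : ℤ) + psum f (List.length ([] : List (Fin N)))).toNat = j := by
        simp [psum_zero]
      rw [h2, pathWeight_nil]
      simpa [Module.End.one_apply] using hv
  | cons c σ IH =>
    intro j f v hv hf
    rcases IH j (f ∘ Fin.castSucc) v hv (fun n => hf _) with h0 | ⟨hnn, hsupp⟩
    · left
      rw [pathWeight_cons, Module.End.mul_apply, h0, map_zero]
    · have hps : ∀ m, m ≤ σ.length → psum (f ∘ Fin.castSucc) m = psum f m :=
        fun m hm => psum_castSucc f hm
      have h0L : 0 ≤ (j : ℤ) + psum f σ.length := by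
        rw [← hps _ le_rfl]; exact hnn _ le_rfl
      set m' : ℕ := ((j : ℤ) + psum f σ.length).toNat with hm'
      have hm'eq : (j : ℤ) + psum f σ.length = (m' : ℤ) := (Int.toNat_of_nonneg h0L).symm
      have hsupp' : SuppOn m' (pathWeight A B σ j (f ∘ Fin.castSucc) v) := by
        rw [hps _ le_rfl] at hsupp
        exact hsupp
      have hnn' : ∀ m, m ≤ σ.length → 0 ≤ (j : ℤ) + psum f m := fun m hm => by
        rw [← hps m hm]; exact hnn m hm
      have hlast : psum f (σ.length + 1) = psum f σ.length + f (Fin.last σ.length) :=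
        psum_succ f (Nat.lt_succ_self σ.length)
      rcases hf (Fin.last σ.length) with hs | hs | hs
      · -- fall
        have hstep : stepWeight A B c ((j : ℤ) + psum f σ.length) (-1)
            = astar A m' c := by
          simp only [stepWeight]
          norm_num [← hm']
        rcases Nat.eq_zero_or_pos m' with hz | hpos
        · left
          rw [pathWeight_cons, Module.End.mul_apply, hs, hstep, hz]
          exact astar_zero0 A hA0 c _
        · right
          have hnew : (j : ℤ) + psum f (σ.length + 1) = (m' : ℤ) - 1 := by
            rw [hlast, hs]; omega
          constructor
          · intro m hm
            simp only [List.length_cons] at hm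
            by_cases hm2 : m ≤ σ.length
            · exact hnn' m hm2
            · have hm3 : m = σ.length + 1 := by omega
              subst hm3
              omega
          · simp only [List.length_cons]
            rw [pathWeight_cons, Module.End.mul_apply, hs, hstep]
            rw [show ((j : ℤ) + psum f (σ.length + 1)).toNat = m' - 1 by omega]
            exact suppOn_astar A m' c _
      · -- level
        have hstep : stepWeight A B c ((j : ℤ) + psum f σ.length) 0
            = B m' c := by
          simp only [stepWeight]
          norm_num [← hm']
        right
        have hnew : (j : ℤ) + psum f (σ.length + 1) = (m' : ℤ) := by
          rw [hlast, hs]; omega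
        constructor
        · intro m hm
          simp only [List.length_cons] at hm
          by_cases hm2 : m ≤ σ.length
          · exact hnn' m hm2
          · have hm3 : m = σ.length + 1 := by omega
            subst hm3
            omega
        · simp only [List.length_cons]
          rw [pathWeight_cons, Module.End.mul_apply, hs, hstep]
          rw [show ((j : ℤ) + psum f (σ.length + 1)).toNat = m' by omega]
          exact suppOn_B B hB1 m' c _
      · -- rise
        have hstep : stepWeight A B c ((j : ℤ) + psum f σ.length) 1
            = A (m' + 1) c := by
          simp only [stepWeight]
          norm_num [← hm']
        right
        have hnew : (j : ℤ) + psum f (σ.length + 1) = (m' : ℤ) + 1 := by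
          rw [hlast, hs]; omega
        constructor
        · intro m hm
          simp only [List.length_cons] at hm
          by_cases hm2 : m ≤ σ.length
          · exact hnn' m hm2
          · have hm3 : m = σ.length + 1 := by omega
            subst hm3
            omega
        · simp only [List.length_cons]
          rw [pathWeight_cons, Module.End.mul_apply, hs, hstep]
          rw [show ((j : ℤ) + psum f (σ.length + 1)).toNat = m' + 1 by omega]
          exact suppOn_A A hA1 (m' + 1) c _

end Aux4
section Aux5
variable {N : ℕ} (A B : ℕ → Fin N → Module.End ℂ (W N))

lemma sum_snoc_reindex {M : Type*} [AddCommMonoid M] {L : ℕ} (S : Finset ℤ)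
    (F : (Fin (L + 1) → ℤ) → M) :
    ∑ f ∈ Fintype.piFinset (fun _ : Fin (L + 1) => S), F f
      = ∑ g ∈ Fintype.piFinset (fun _ : Fin L => S), ∑ s ∈ S, F (Fin.snoc g s) := by
  rw [← Finset.sum_product' (f := fun g s => F (Fin.snoc g s))]
  refine Finset.sum_nbij' (fun f => (Fin.init f, f (Fin.last L)))
    (fun p => Fin.snoc p.1 p.2) ?_ ?_ ?_ ?_ ?_
  · intro f hf
    rw [Fintype.mem_piFinset] at hf
    rw [Finset.mem_product]
    exact ⟨Fintype.mem_piFinset.mpr fun i => hf _, hf _⟩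
  · intro p hp
    rw [Finset.mem_product] at hp
    rw [Fintype.mem_piFinset]
    intro i
    refine Fin.lastCases ?_ ?_ i
    · simp only [Fin.snoc_last]
      exact hp.2
    · intro i'
      simp only [Fin.snoc_castSucc]
      exact Fintype.mem_piFinset.mp hp.1 _
  · intro f _
    exact Fin.snoc_init_self f
  · intro p _
    simp [Prod.ext_iff, Fin.init_snoc, Fin.snoc_last]
  · intro f _
    rw [Fin.snoc_init_self f]

variable (hA0 : ∀ n k (β : List (Fin N)), β.length + 1 ≠ n → A n k (eb β) = 0)
variable (hA1 : ∀ n k (β α : List (Fin N)), (A n k (eb β)) α ≠ 0 → α.length = n)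
variable (hB1 : ∀ n k (β α : List (Fin N)), (B n k (eb β)) α ≠ 0 → α.length = n)

include hA0 hA1 hB1 in
lemma Jword_expand (σ : List (Fin N)) : ∀ (j : ℕ) (v : W N), SuppOn j v →
    Jword A B σ v
      = ∑ f ∈ Fintype.piFinset (fun _ : Fin σ.length => ({-1, 0, 1} : Finset ℤ)),
          pathWeight A B σ j f v := by
  induction σ with
  | nil =>
    intro j v _
    haveI hsub : Subsingleton (Fin (List.length ([] : List (Fin N))) → ℤ) :=
      ⟨fun f g => funext fun i => absurd i.2 (Nat.not_lt_zero _)⟩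
    have hmem : finZeroElim ∈ Fintype.piFinset
        (fun _ : Fin (List.length ([] : List (Fin N))) => ({-1, 0, 1} : Finset ℤ)) := by
      rw [Fintype.mem_piFinset]
      intro i
      exact absurd i.2 (Nat.not_lt_zero _)
    have huniv : (Fintype.piFinset (fun _ : Fin (List.length ([] : List (Fin N)))
        => ({-1, 0, 1} : Finset ℤ))) = {finZeroElim} :=
      Finset.eq_singleton_iff_unique_mem.mpr
        ⟨hmem, fun f _ => Subsingleton.elim f finZeroElim⟩
    rw [huniv, Finset.sum_singleton, pathWeight_nil]
    simp [Jword, Module.End.one_apply]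
  | cons c σ IH =>
    intro j v hv
    have hJ : Jword A B (c :: σ) v = Jop A B c (Jword A B σ v) := by
      simp [Jword, List.map_cons, List.prod_cons, Module.End.mul_apply]
    rw [hJ, IH j v hv, map_sum]
    have hre := sum_snoc_reindex (L := σ.length) ({-1, 0, 1} : Finset ℤ)
        (fun f => pathWeight A B (c :: σ) j f v)
    refine Eq.trans ?_ hre.symm
    refine Finset.sum_congr rfl fun g hg => ?_
    have hgmem : ∀ n, g n = -1 ∨ g n = 0 ∨ g n = 1 := by
      intro n
      have := Fintype.mem_piFinset.mp hg n
      simpa using this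
    have hdecomp : ∀ s : ℤ, pathWeight A B (c :: σ) j (Fin.snoc g s) v
        = stepWeight A B c ((j : ℤ) + psum g σ.length) s
            (pathWeight A B σ j g v) := by
      intro s
      rw [pathWeight_cons, Module.End.mul_apply, snoc_comp_castSucc,
        psum_snoc g s (le_refl σ.length)]
      congr 1
      simp [Fin.snoc_last]
    rcases pathLem A B hA0 hA1 hB1 σ j g v hv hgmem with h0 | ⟨hnn, hsupp⟩
    · rw [h0, map_zero]
      refine (Finset.sum_eq_zero fun s _ => ?_).symm
      rw [hdecomp s, h0, map_zero]
    · set m' : ℕ := ((j : ℤ) + psum g σ.length).toNat with hm'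
      have h0L : 0 ≤ (j : ℤ) + psum g σ.length := hnn _ le_rfl
      have hm'eq : (j : ℤ) + psum g σ.length = (m' : ℤ) := (Int.toNat_of_nonneg h0L).symm
      rw [Jop_stepSum A B hA0 hA1 hB1 c _ hsupp]
      refine Finset.sum_congr rfl fun s _ => ?_
      rw [hdecomp s, hm'eq]

end Aux5
/-- if `φ` is a strictly positive unital functional on `P_N` whose
orthonormal polynomials `{φ_τ}` satisfy the three-term recurrence
`X_k Φ_n = Φ_{n+1} A_{n+1,k} + Φ_n B_{n,k} + Φ_{n-1} A*_{n,k}` with Jacobi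
coefficients `A_{n,k}`, `B_{n,k}`, then for every nonempty word `σ` the moment
`s_σ = φ(X_σ)` equals `Σ_{p ∈ M_σ} w(p)` — the sum over all admissible colored
Motzkin-type paths from `(0,i_p,0)` to `(|σ|,i_1,0)` of the `(∅,∅)` entry of the
matrix weight `w(p)`. -/
theorem moments_eq_sum_path_weights {N : ℕ}
    (φ : FreeAlgebra ℂ (Fin N) →ₗ[ℂ] ℂ) (hφ1 : φ 1 = 1)
    (hφpos : ∀ P : FreeAlgebra ℂ (Fin N), P ≠ 0 → 0 < φ (star P * P))
    (P : List (Fin N) → FreeAlgebra ℂ (Fin N)) (hP0 : P [] = 1)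
    (hortho : ∀ α β : List (Fin N),
      φ (star (P β) * P α) = if α = β then 1 else 0)
    (A B : ℕ → Fin N → Module.End ℂ (W N))
    (hA0 : ∀ n k (β : List (Fin N)), β.length + 1 ≠ n → A n k (eb β) = 0)
    (hA1 : ∀ n k (β α : List (Fin N)), (A n k (eb β)) α ≠ 0 → α.length = n)
    (hB0 : ∀ n k (β : List (Fin N)), β.length ≠ n → B n k (eb β) = 0)
    (hB1 : ∀ n k (β α : List (Fin N)), (B n k (eb β)) α ≠ 0 → α.length = n)
    (hBsa : ∀ n k (α β : List (Fin N)),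
      (starRingEnd ℂ) ((B n k (eb β)) α) = (B n k (eb α)) β)
    (hrec : ∀ (k : Fin N) (τ : List (Fin N)),
      FreeAlgebra.ι ℂ k * P τ
        = (∑ α ∈ Words N (τ.length + 1), ((A (τ.length + 1) k (eb τ)) α) • P α)
          + (∑ α ∈ Words N τ.length, ((B τ.length k (eb τ)) α) • P α)
          + (∑ α ∈ Words N (τ.length - 1), ((astar A τ.length k (eb τ)) α) • P α))
    (σ : List (Fin N)) (hσ : σ ≠ []) :
    φ (Xw σ)
      = ∑ f ∈ pathsSet σ.length 0 0,
          ((pathWeight A B σ 0 f) (eb ([] : List (Fin N)))) ([] : List (Fin N)) := by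
  classical
  set T : W N →ₗ[ℂ] FreeAlgebra ℂ (Fin N) :=
    (Finsupp.lift (FreeAlgebra ℂ (Fin N)) ℂ (List (Fin N))) P with hT
  have T_eb : ∀ τ : List (Fin N), T (eb τ) = P τ := by
    intro τ
    simp [hT, eb, Finsupp.lift_apply, Finsupp.sum_single_index]
  have T_repr : ∀ w : W N, T w = ∑ α ∈ w.support, w α • P α := by
    intro w
    conv_lhs => rw [repr_eq w]
    rw [map_sum]
    simp [T_eb]
  have T_sum : ∀ (n : ℕ) (w : W N), SuppOn n w → ∑ α ∈ Words N n, w α • P α = T w := by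
    intro n w hw
    rw [T_repr]
    refine (Finset.sum_subset ?_ ?_).symm
    · intro α hα
      exact mem_Words.mpr (hw α (Finsupp.mem_support_iff.mp hα))
    · intro α _ hα
      rw [Finsupp.notMem_support_iff.mp hα, zero_smul]
  have key : ∀ (k : Fin N) (v : W N), T (Jop A B k v) = FreeAlgebra.ι ℂ k * T v := by
    intro k v
    rw [end_apply_sum (Jop A B k) v, map_sum]
    conv_rhs => rw [repr_eq v, map_sum, Finset.mul_sum]
    refine Finset.sum_congr rfl fun τ _ => ?_
    rw [map_smul, map_smul, mul_smul_comm]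
    refine congrArg (fun z => v τ • z) ?_
    rw [Jop_eb, map_add, map_add,
      ← T_sum (τ.length + 1) _ (suppOn_A A hA1 (τ.length + 1) k (eb τ)),
      ← T_sum τ.length _ (suppOn_B B hB1 τ.length k (eb τ)),
      ← T_sum (τ.length - 1) _ (suppOn_astar A τ.length k (eb τ)), T_eb]
    exact (hrec k τ).symm
  have Tword : ∀ (σ' : List (Fin N)) (v : W N), T (Jword A B σ' v) = Xw σ' * T v := by
    intro σ'
    induction σ' with
    | nil =>
      intro v
      simp [Jword, Xw, Module.End.one_apply]
    | cons c τ ih =>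
      intro v
      have hstep : Jword A B (c :: τ) v = Jop A B c (Jword A B τ v) := by
        simp [Jword, List.map_cons, List.prod_cons, Module.End.mul_apply]
      rw [hstep, key, ih]
      simp [Xw, List.map_cons, List.prod_cons, mul_assoc]
  have phiP : ∀ α : List (Fin N), φ (P α) = if α = [] then 1 else 0 := by
    intro α
    have h := hortho α []
    rwa [hP0, star_one, one_mul] at h
  have phiT : ∀ w : W N, φ (T w) = w [] := by
    intro w
    rw [T_repr, map_sum]
    have hterm : ∀ α ∈ w.support, φ (w α • P α) = if α = [] then w α else 0 := by
      intro α _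
      rw [map_smul, phiP, smul_eq_mul]
      split <;> simp
    rw [Finset.sum_congr rfl hterm,
      Finset.sum_ite_eq' w.support ([] : List (Fin N)) (fun α => w α)]
    split
    · rfl
    · next h => exact (Finsupp.notMem_support_iff.mp h).symm
  have h1 : φ (Xw σ) = (Jword A B σ (eb ([] : List (Fin N)))) ([] : List (Fin N)) := by
    have hX : Xw σ = Xw σ * T (eb ([] : List (Fin N))) := by
      rw [T_eb, hP0, mul_one]
    rw [hX, ← Tword, phiT]
  rw [h1, Jword_expand A B hA0 hA1 hB1 σ 0 (eb ([] : List (Fin N))) (suppOn_eb []),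
    Finset.sum_apply']
  symm
  unfold pathsSet
  rw [Finset.filter_congr_decidable]
  apply Finset.sum_subset (Finset.filter_subset _ _)
  intro f hf hnf
  by_contra hne
  apply hnf
  rw [Finset.mem_filter]
  have hfmem : ∀ n, f n = -1 ∨ f n = 0 ∨ f n = 1 := by
    intro n
    have := Fintype.mem_piFinset.mp hf n
    simpa using this
  rcases pathLem A B hA0 hA1 hB1 σ 0 f (eb ([] : List (Fin N))) (suppOn_eb []) hfmem
    with h0 | ⟨hnn, hsupp⟩
  · rw [h0] at hne
    simp at hne
  · refine ⟨hf, fun m hm => hnn m (Nat.lt_succ_iff.mp (Finset.mem_range.mp hm)), ?_⟩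
    have hz := hsupp ([] : List (Fin N)) hne
    have hge := hnn σ.length le_rfl
    simp only [List.length_nil] at hz
    omega
end
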